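/- arXiv:1903.06084 — 3 statements merged into one kernel-verified Lean document; each statement's English description precedes it below -/
import Mathlib

section
/- Let X be a geodesic metric space written as a finite union of closed subsets X = A₁ ∪ ... ∪ Aₙ, and let f : X → Y be a map to a metric space Y whose restriction to each Aᵢ is bornologous (with some control function). Then f is bornologous. -/
open Metric Bornology Set

/-- A metric space is geodesic if any two points are joined by an isometrically
embedded interval. -/
def GeodesicSpace (X : Type*) [MetricSpace X] : Prop :=
  ∀ x y : X, ∃ γ : ℝ → X, γ 0 = x ∧ γ (dist x y) = y ∧
    ∀ s ∈ Set.Icc (0 : ℝ) (dist x y), ∀ t ∈ Set.Icc (0 : ℝ) (dist x y),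
      dist (γ s) (γ t) = |s - t|

/-- Let `X` be a geodesic metric space written as a finite union of
closed subsets `X = A₁ ∪ ... ∪ Aₙ`, and let `f : X → Y` be a map whose restriction to
each `Aᵢ` is bornologous (with some nondecreasing control function). Then `f` is
bornologous. -/
theorem bornologous_of_finite_closed_cover {X Y : Type*} [MetricSpace X] [MetricSpace Y]
    (hX : GeodesicSpace X) (n : ℕ) (A : Fin n → Set X)
    (hclosed : ∀ i, IsClosed (A i)) (hcover : (⋃ i, A i) = Set.univ)
    (f : X → Y)
    (hborn : ∀ i, ∃ ρ : ℝ → ℝ, Monotone ρ ∧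
      ∀ x ∈ A i, ∀ x' ∈ A i, dist (f x) (f x') ≤ ρ (dist x x')) :
    ∃ ρ : ℝ → ℝ, Monotone ρ ∧ ∀ x x' : X, dist (f x) (f x') ≤ ρ (dist x x') := by
  classical
  choose ρ hmono hρ using hborn
  set σ : ℝ → ℝ := fun t => ∑ i : Fin n, max (ρ i t) 0 with hσ
  have hσmono : Monotone σ := by
    intro a b hab
    exact Finset.sum_le_sum fun i _ => max_le_max (hmono i hab) le_rfl
  have hσnonneg : ∀ t, 0 ≤ σ t :=
    fun t => Finset.sum_nonneg fun i _ => le_max_right _ _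
  refine ⟨fun t => n * σ t, fun a b hab =>
    mul_le_mul_of_nonneg_left (hσmono hab) (Nat.cast_nonneg n), ?_⟩
  intro x x'
  obtain ⟨γ, hγ0, hγd, hγiso⟩ := hX x x'
  set d := dist x x' with hd
  have hd0 : 0 ≤ d := dist_nonneg
  -- preimages of the pieces along the geodesic
  set B : Fin n → Set ℝ := fun j => Icc 0 d ∩ γ ⁻¹' (A j) with hB
  have hγcont : ContinuousOn γ (Icc 0 d) := by
    have : LipschitzOnWith 1 γ (Icc 0 d) :=
      LipschitzOnWith.of_dist_le_mul fun s hs t ht => by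
        rw [hγiso s hs t ht, Real.dist_eq]; simp
    exact this.continuousOn
  have hBclosed : ∀ j, IsClosed (B j) :=
    fun j => hγcont.preimage_isClosed_of_isClosed isClosed_Icc (hclosed j)
  have hBbdd : ∀ j, BddAbove (B j) := fun j => (bddAbove_Icc).mono inter_subset_left
  have hcov' : ∀ t ∈ Icc (0:ℝ) d, ∃ j, t ∈ B j := by
    intro t ht
    have : γ t ∈ ⋃ i, A i := hcover ▸ mem_univ _
    obtain ⟨j, hj⟩ := mem_iUnion.1 this
    exact ⟨j, ht, hj⟩
  -- hop bound
  have hop : ∀ j, ∀ s ∈ B j, ∀ t ∈ B j, dist (f (γ s)) (f (γ t)) ≤ σ d := by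
    intro j s hs t ht
    have h1 : dist (f (γ s)) (f (γ t)) ≤ ρ j (dist (γ s) (γ t)) :=
      hρ j _ hs.2 _ ht.2
    have h2 : dist (γ s) (γ t) = |s - t| := hγiso s hs.1 t ht.1
    have h3 : |s - t| ≤ d := by
      rw [abs_sub_le_iff]
      constructor <;> linarith [hs.1.1, hs.1.2, ht.1.1, ht.1.2]
    calc dist (f (γ s)) (f (γ t)) ≤ ρ j |s - t| := by rwa [h2] at h1
      _ ≤ ρ j d := hmono j h3
      _ ≤ max (ρ j d) 0 := le_max_left _ _
      _ ≤ σ d := Finset.single_le_sum (fun i _ => le_max_right (ρ i d) 0)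
          (Finset.mem_univ j)
  -- available indices
  set avail : ℝ → Finset (Fin n) :=
    fun t => Finset.univ.filter (fun j => ∃ s ∈ B j, t < s) with havail
  -- main induction
  have key : ∀ m : ℕ, ∀ t ∈ Icc (0:ℝ) d, (avail t).card ≤ m →
      dist (f (γ t)) (f (γ d)) ≤ m * σ d := by
    intro m
    induction m with
    | zero =>
      intro t ht hcard
      rcases eq_or_lt_of_le ht.2 with heq | hlt
      · rw [heq]; simp [hσnonneg d]
      · exfalso
        obtain ⟨j, hj⟩ := hcov' d ⟨hd0, le_rfl⟩
        have : j ∈ avail t := by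
          simp only [havail, Finset.mem_filter, Finset.mem_univ, true_and]
          exact ⟨d, hj, hlt⟩
        rw [Finset.card_eq_zero.1 (Nat.le_zero.1 hcard)] at this
        simp at this
    | succ m ih =>
      intro t ht hcard
      rcases eq_or_lt_of_le ht.2 with heq | hlt
      · rw [heq]
        simp only [dist_self]
        positivity
      -- find j with t ∈ B j and B j going strictly past t
      · have hsub : Ioc t d ⊆ ⋃ j, B j ∩ Ioc t d := by
          intro s hs
          obtain ⟨j, hj⟩ := hcov' s ⟨le_trans ht.1 hs.1.le, hs.2⟩
          exact mem_iUnion.2 ⟨j, hj, hs⟩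
        have htcl : t ∈ closure (⋃ j, B j ∩ Ioc t d) := by
          apply closure_mono hsub
          rw [closure_Ioc hlt.ne]
          exact ⟨le_rfl, ht.2⟩
        rw [closure_iUnion_of_finite] at htcl
        obtain ⟨j, hj⟩ := mem_iUnion.1 htcl
        have hne : (B j ∩ Ioc t d).Nonempty := by
          by_contra h
          rw [not_nonempty_iff_eq_empty.1 h, closure_empty] at hj
          exact hj
        have htBj : t ∈ B j :=
          (hBclosed j).closure_subset ((closure_mono inter_subset_left) hj)
        set t' := sSup (B j) with ht'
        have hBjne : (B j).Nonempty := ⟨t, htBj⟩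
        have ht'mem : t' ∈ B j := (hBclosed j).csSup_mem hBjne (hBbdd j)
        obtain ⟨s, hsB, hsIoc⟩ := hne
        have htt' : t < t' := lt_of_lt_of_le hsIoc.1 (le_csSup (hBbdd j) hsB)
        -- availability decreases
        have hss : avail t' ⊆ (avail t).erase j := by
          intro i hi
          simp only [havail, Finset.mem_filter, Finset.mem_univ, true_and] at hi
          obtain ⟨u, huB, hut'⟩ := hi
          refine Finset.mem_erase.2 ⟨?_, ?_⟩
          · intro hij
            exact absurd (le_csSup (hBbdd j) (hij ▸ huB)) (not_le.2 hut')
          · simp only [havail, Finset.mem_filter, Finset.mem_univ, true_and]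
            exact ⟨u, huB, lt_trans htt' hut'⟩
        have hjavail : j ∈ avail t := by
          simp only [havail, Finset.mem_filter, Finset.mem_univ, true_and]
          exact ⟨t', ht'mem, htt'⟩
        have hcard' : (avail t').card ≤ m := by
          calc (avail t').card ≤ ((avail t).erase j).card := Finset.card_le_card hss
            _ = (avail t).card - 1 := Finset.card_erase_of_mem hjavail
            _ ≤ m := by omega
        have hIH := ih t' ht'mem.1 hcard'
        calc dist (f (γ t)) (f (γ d))
            ≤ dist (f (γ t)) (f (γ t')) + dist (f (γ t')) (f (γ d)) := dist_triangle _ _ _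
          _ ≤ σ d + m * σ d := add_le_add (hop j t htBj t' ht'mem) hIH
          _ = (m + 1 : ℕ) * σ d := by push_cast; ring
  have h0 : (0:ℝ) ∈ Icc (0:ℝ) d := ⟨le_rfl, hd0⟩
  have hle : (avail 0).card ≤ n := le_trans (Finset.card_le_card (Finset.subset_univ _))
    (by simp)
  have := key n 0 h0 hle
  rwa [hγ0, hγd] at this
end

section
/- Let α, β : c([0,1]) → X be bornologous maps into a metric space X with sup_x d(α(x,x), β(x,0)) < ∞. Define the concatenation α∗β : c([0,1]) → X by (α∗β)(x,t) = α(x, 2t) if t ≤ x/2 and (α∗β)(x,t) = β(x, 2t - x) if x/2 < t ≤ x. Then α∗β is bornologous; moreover if α and β are coarse, so is α∗β. -/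
open Metric Bornology Set

noncomputable section

/-- The metric cone over `[0,1]`: `c([0,1]) = {(x,t) : 0 ≤ t ≤ x} ⊆ ℝ²` with the
Euclidean metric. -/
def c01 : Set (EuclideanSpace ℝ (Fin 2)) := {v | 0 ≤ v 1 ∧ v 1 ≤ v 0}

/-- Bornologous on a subset: a control function for distances of pairs in `A`. -/
def BornologousOn {X Y : Type*} [PseudoMetricSpace X] [PseudoMetricSpace Y]
    (A : Set X) (f : X → Y) : Prop :=
  ∃ ρ : ℝ → ℝ, ∀ x ∈ A, ∀ x' ∈ A, dist (f x) (f x') ≤ ρ (dist x x')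

/-- Coarse on a subset: bornologous on `A` and preimages (within `A`) of bounded sets
are bounded. -/
def CoarseOn {X Y : Type*} [PseudoMetricSpace X] [PseudoMetricSpace Y]
    (A : Set X) (f : X → Y) : Prop :=
  BornologousOn A f ∧
    ∀ B : Set Y, Bornology.IsBounded B → Bornology.IsBounded (A ∩ f ⁻¹' B)

/-- The concatenation `α∗β` of two maps on `c([0,1])`:
`(α∗β)(x,t) = α(x,2t)` for `t ≤ x/2` and `(α∗β)(x,t) = β(x,2t-x)` for `t > x/2`. -/
def concatMap {X : Type*} (α β : EuclideanSpace ℝ (Fin 2) → X) :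
    EuclideanSpace ℝ (Fin 2) → X := fun v =>
  if v 1 ≤ v 0 / 2 then α !₂[v 0, 2 * v 1] else β !₂[v 0, 2 * v 1 - v 0]

private lemma mem_c01 {a b : ℝ} (h0 : 0 ≤ b) (h1 : b ≤ a) :
    (!₂[a, b] : EuclideanSpace ℝ (Fin 2)) ∈ c01 := by
  simp only [c01, Set.mem_setOf_eq, Matrix.cons_val_one, Matrix.head_cons, PiLp.toLp_apply, Matrix.cons_val_zero]
  exact ⟨h0, h1⟩

private lemma e2_dist_sq (v w : EuclideanSpace ℝ (Fin 2)) :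
    dist v w ^ 2 = (v 0 - w 0) ^ 2 + (v 1 - w 1) ^ 2 := by
  rw [EuclideanSpace.dist_eq, Real.sq_sqrt (Finset.sum_nonneg fun i _ => sq_nonneg _),
    Fin.sum_univ_two, Real.dist_eq, Real.dist_eq, sq_abs, sq_abs]

private lemma abs_le_of_sq_le {a s : ℝ} (hs : 0 ≤ s) (h : a ^ 2 ≤ s ^ 2) : |a| ≤ s := by
  have h' := Real.sqrt_le_sqrt h
  rwa [Real.sqrt_sq_eq_abs, Real.sqrt_sq hs] at h'

private lemma eq_of_sq_eq {a b : ℝ} (ha : 0 ≤ a) (hb : 0 ≤ b) (h : a ^ 2 = b ^ 2) : a = b := by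
  rw [← Real.sqrt_sq ha, h, Real.sqrt_sq hb]

private lemma e2_coord0_le (v w : EuclideanSpace ℝ (Fin 2)) : |v 0 - w 0| ≤ dist v w := by
  refine abs_le_of_sq_le dist_nonneg ?_
  rw [e2_dist_sq]; nlinarith [sq_nonneg (v 1 - w 1)]

private lemma e2_coord1_le (v w : EuclideanSpace ℝ (Fin 2)) : |v 1 - w 1| ≤ dist v w := by
  refine abs_le_of_sq_le dist_nonneg ?_
  rw [e2_dist_sq]; nlinarith [sq_nonneg (v 0 - w 0)]

private lemma e2_dist_le (v w : EuclideanSpace ℝ (Fin 2)) {c : ℝ} (hc : 0 ≤ c)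
    (h : (v 0 - w 0) ^ 2 + (v 1 - w 1) ^ 2 ≤ c ^ 2) : dist v w ≤ c := by
  have h1 : dist v w ^ 2 ≤ c ^ 2 := by rw [e2_dist_sq]; exact h
  have h2 := abs_le_of_sq_le hc h1
  rwa [abs_of_nonneg dist_nonneg] at h2


private lemma mono_control {X : Type*} [MetricSpace X] {f : EuclideanSpace ℝ (Fin 2) → X}
    (hf : BornologousOn c01 f) :
    ∃ σ : ℝ → ℝ, (∀ s : ℝ, 0 ≤ s → 0 ≤ σ s) ∧
      ∀ p ∈ c01, ∀ q ∈ c01, ∀ s : ℝ, dist p q ≤ s → dist (f p) (f q) ≤ σ s := by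
  obtain ⟨ρ, hρ⟩ := hf
  have hρ0 : ∀ u : ℝ, 0 ≤ u → 0 ≤ ρ u := by
    intro u hu
    set pu : EuclideanSpace ℝ (Fin 2) := !₂[u, 0] with hpu
    set p0 : EuclideanSpace ℝ (Fin 2) := !₂[0, 0] with hp0
    have h1 : pu ∈ c01 := mem_c01 le_rfl hu
    have h2 : p0 ∈ c01 := mem_c01 le_rfl le_rfl
    have hd : dist pu p0 = u := by
      refine eq_of_sq_eq dist_nonneg hu ?_
      rw [e2_dist_sq, hpu, hp0]
      simp only [Matrix.cons_val_zero, Matrix.cons_val_one, Matrix.head_cons, PiLp.toLp_apply]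
      ring
    have hle := hρ _ h1 _ h2
    rw [hd] at hle
    exact le_trans dist_nonneg hle
  refine ⟨fun s => 2 * ρ (Real.sqrt 125 * s) + 2 * ρ (2 * s), ?_, ?_⟩
  · intro s hs
    dsimp only
    have n1 := hρ0 (Real.sqrt 125 * s) (by positivity)
    have n2 := hρ0 (2 * s) (by linarith)
    linarith
  · intro p hp q hq s hs
    dsimp only
    have hs0 : 0 ≤ s := le_trans dist_nonneg hs
    by_cases hpq : p = q
    · subst hpq
      simp only [dist_self]
      have n1 := hρ0 (Real.sqrt 125 * s) (by positivity)
      have n2 := hρ0 (2 * s) (by linarith)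
      linarith
    · have hb0 : 0 ≤ p 1 := hp.1
      have hba : p 1 ≤ p 0 := hp.2
      have he0 : 0 ≤ q 1 := hq.1
      have hec : q 1 ≤ q 0 := hq.2
      set a := p 0 with hadef
      set b := p 1 with hbdef
      set cc := q 0 with hccdef
      set e := q 1 with hedef
      have hd0 : 0 < dist p q := dist_pos.mpr hpq
      set d := dist p q with hddef
      have hd2 : d ^ 2 = (a - cc) ^ 2 + (b - e) ^ 2 := e2_dist_sq p q
      have hhnn : 0 ≤ 4 * s ^ 2 - d ^ 2 / 4 := by nlinarith
      set h := Real.sqrt (4 * s ^ 2 - d ^ 2 / 4) with hhdef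
      have hh2 : h ^ 2 = 4 * s ^ 2 - d ^ 2 / 4 := Real.sq_sqrt hhnn
      have hhn : 0 ≤ h := Real.sqrt_nonneg _
      have hhle : h ≤ 2 * s := by
        have h' := abs_le_of_sq_le (a := h) (show (0:ℝ) ≤ 2 * s by linarith) (by nlinarith)
        rwa [abs_of_nonneg hhn] at h'
      set k := h / d with hkdef
      have hkd : k * d = h := div_mul_cancel₀ _ (ne_of_gt hd0)
      have hkn : 0 ≤ k := div_nonneg hhn hd0.le
      have hu0 : |cc - a| ≤ d := by rw [abs_sub_comm]; exact e2_coord0_le p q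
      have hu1 : |e - b| ≤ d := by rw [abs_sub_comm]; exact e2_coord1_le p q
      have hku0 : |k * (cc - a)| ≤ h := by
        rw [abs_mul, abs_of_nonneg hkn]
        calc k * |cc - a| ≤ k * d := mul_le_mul_of_nonneg_left hu0 hkn
          _ = h := hkd
      have hku1 : |k * (e - b)| ≤ h := by
        rw [abs_mul, abs_of_nonneg hkn]
        calc k * |e - b| ≤ k * d := mul_le_mul_of_nonneg_left hu1 hkn
          _ = h := hkd
      obtain ⟨hku0l, hku0r⟩ := abs_le.mp hku0
      obtain ⟨hku1l, hku1r⟩ := abs_le.mp hku1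
      set p' : EuclideanSpace ℝ (Fin 2) := !₂[a + 10 * s, b + 5 * s] with hp'def
      set q' : EuclideanSpace ℝ (Fin 2) := !₂[cc + 10 * s, e + 5 * s] with hq'def
      set r : EuclideanSpace ℝ (Fin 2) :=
        !₂[(a + cc) / 2 + 10 * s - k * (e - b), (b + e) / 2 + 5 * s + k * (cc - a)] with hrdef
      have hp'm : p' ∈ c01 := mem_c01 (by linarith) (by linarith)
      have hq'm : q' ∈ c01 := mem_c01 (by linarith) (by linarith)
      have hrm : r ∈ c01 := mem_c01 (by linarith) (by linarith)
      have hk2 : k ^ 2 * d ^ 2 = h ^ 2 := by rw [← hkd]; ring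
      have hdpp' : dist p p' = Real.sqrt 125 * s := by
        refine eq_of_sq_eq dist_nonneg (by positivity) ?_
        rw [e2_dist_sq, mul_pow, Real.sq_sqrt (by norm_num : (0:ℝ) ≤ 125), hp'def]
        simp only [Matrix.cons_val_zero, Matrix.cons_val_one, Matrix.head_cons, PiLp.toLp_apply]
        ring
      have hdqq' : dist q q' = Real.sqrt 125 * s := by
        refine eq_of_sq_eq dist_nonneg (by positivity) ?_
        rw [e2_dist_sq, mul_pow, Real.sq_sqrt (by norm_num : (0:ℝ) ≤ 125), hq'def]
        simp only [Matrix.cons_val_zero, Matrix.cons_val_one, Matrix.head_cons, PiLp.toLp_apply]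
        ring
      have hdp'r : dist p' r = 2 * s := by
        refine eq_of_sq_eq dist_nonneg (by linarith) ?_
        rw [e2_dist_sq, hp'def, hrdef]
        simp only [Matrix.cons_val_zero, Matrix.cons_val_one, Matrix.head_cons, PiLp.toLp_apply]
        linear_combination (-(1:ℝ)/4 - k ^ 2) * hd2 + hk2 + hh2
      have hdq'r : dist q' r = 2 * s := by
        refine eq_of_sq_eq dist_nonneg (by linarith) ?_
        rw [e2_dist_sq, hq'def, hrdef]
        simp only [Matrix.cons_val_zero, Matrix.cons_val_one, Matrix.head_cons, PiLp.toLp_apply]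
        linear_combination (-(1:ℝ)/4 - k ^ 2) * hd2 + hk2 + hh2
      have t1 := hρ _ hp _ hp'm
      rw [hdpp'] at t1
      have t2 := hρ _ hp'm _ hrm
      rw [hdp'r] at t2
      have t3 := hρ _ hrm _ hq'm
      rw [dist_comm r q', hdq'r] at t3
      have t4 := hρ _ hq'm _ hq
      rw [dist_comm q' q, hdqq'] at t4
      calc dist (f p) (f q) ≤ dist (f p) (f r) + dist (f r) (f q) := dist_triangle _ _ _
        _ ≤ (dist (f p) (f p') + dist (f p') (f r)) + (dist (f r) (f q') + dist (f q') (f q)) :=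
            add_le_add (dist_triangle _ _ _) (dist_triangle _ _ _)
        _ ≤ (ρ (Real.sqrt 125 * s) + ρ (2 * s)) + (ρ (2 * s) + ρ (Real.sqrt 125 * s)) := by
            linarith
        _ = 2 * ρ (Real.sqrt 125 * s) + 2 * ρ (2 * s) := by ring


private lemma cross_bound {X : Type*} [MetricSpace X] (α β : EuclideanSpace ℝ (Fin 2) → X)
    (σα σβ : ℝ → ℝ) (D : ℝ)
    (hσα : ∀ p ∈ c01, ∀ q ∈ c01, ∀ s : ℝ, dist p q ≤ s → dist (α p) (α q) ≤ σα s)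
    (hσβ : ∀ p ∈ c01, ∀ q ∈ c01, ∀ s : ℝ, dist p q ≤ s → dist (β p) (β q) ≤ σβ s)
    (hD : ∀ x : ℝ, 0 ≤ x → dist (α !₂[x, x]) (β !₂[x, 0]) ≤ D)
    (v v' : EuclideanSpace ℝ (Fin 2)) (hv : v ∈ c01) (hv' : v' ∈ c01)
    (h1 : v 1 ≤ v 0 / 2) (h2 : ¬ v' 1 ≤ v' 0 / 2) :
    dist (α !₂[v 0, 2 * v 1]) (β !₂[v' 0, 2 * v' 1 - v' 0]) ≤
      σα (3 * dist v v') + D + σβ (3 * dist v v') := by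
  have ht0 : 0 ≤ v 1 := hv.1
  have htx : v 1 ≤ v 0 := hv.2
  have ht0' : 0 ≤ v' 1 := hv'.1
  have htx' : v' 1 ≤ v' 0 := hv'.2
  push_neg at h2
  set s := dist v v' with hsdef
  have hs0 : 0 ≤ s := dist_nonneg
  obtain ⟨hxl, hxr⟩ := abs_le.mp (e2_coord0_le v v')
  obtain ⟨htl, htr⟩ := abs_le.mp (e2_coord1_le v v')
  have hx0' : 0 ≤ v' 0 := le_trans ht0' htx'
  have leg1 : dist (α !₂[v 0, 2 * v 1]) (α !₂[v' 0, v' 0]) ≤ σα (3 * s) := by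
    refine hσα _ (mem_c01 (by linarith) (by linarith)) _ (mem_c01 hx0' le_rfl) _ ?_
    refine e2_dist_le _ _ (by linarith) ?_
    simp only [Matrix.cons_val_zero, Matrix.cons_val_one, Matrix.head_cons, PiLp.toLp_apply]
    have hA : 2 * v 1 - v' 0 ≤ s := by linarith
    have hB : -(2 * s) ≤ 2 * v 1 - v' 0 := by linarith
    nlinarith [hxl, hxr, hs0]
  have leg2 : dist (α !₂[v' 0, v' 0]) (β !₂[v' 0, 0]) ≤ D := hD _ hx0'
  have leg3 : dist (β !₂[v' 0, (0:ℝ)]) (β !₂[v' 0, 2 * v' 1 - v' 0]) ≤ σβ (3 * s) := by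
    refine hσβ _ (mem_c01 le_rfl hx0') _ (mem_c01 (by linarith) (by linarith)) _ ?_
    refine e2_dist_le _ _ (by linarith) ?_
    simp only [Matrix.cons_val_zero, Matrix.cons_val_one, Matrix.head_cons, PiLp.toLp_apply]
    have hA : 0 ≤ 2 * v' 1 - v' 0 := by linarith
    have hB : 2 * v' 1 - v' 0 ≤ 3 * s := by linarith
    nlinarith [hs0]
  calc dist (α !₂[v 0, 2 * v 1]) (β !₂[v' 0, 2 * v' 1 - v' 0])
      ≤ dist (α !₂[v 0, 2 * v 1]) (α !₂[v' 0, v' 0]) +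
        dist (α !₂[v' 0, v' 0]) (β !₂[v' 0, 2 * v' 1 - v' 0]) := dist_triangle _ _ _
    _ ≤ dist (α !₂[v 0, 2 * v 1]) (α !₂[v' 0, v' 0]) +
        (dist (α !₂[v' 0, v' 0]) (β !₂[v' 0, (0:ℝ)]) +
          dist (β !₂[v' 0, (0:ℝ)]) (β !₂[v' 0, 2 * v' 1 - v' 0])) :=
        add_le_add_right (dist_triangle _ _ _) _
    _ ≤ σα (3 * s) + D + σβ (3 * s) := by linarith



/-- If `α, β : c([0,1]) → X` are bornologous with
`sup_x d(α(x,x), β(x,0)) < ∞`, then the concatenation `α∗β` is bornologous; moreover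
if `α` and `β` are coarse then so is `α∗β`. -/
theorem concat_bornologous_and_coarse {X : Type*} [MetricSpace X]
    (α β : EuclideanSpace ℝ (Fin 2) → X)
    (hα : BornologousOn c01 α) (hβ : BornologousOn c01 β)
    (hclose : ∃ D : ℝ, ∀ x : ℝ, 0 ≤ x → dist (α !₂[x, x]) (β !₂[x, 0]) ≤ D) :
    BornologousOn c01 (concatMap α β) ∧
      (CoarseOn c01 α → CoarseOn c01 β → CoarseOn c01 (concatMap α β)) := by
  obtain ⟨D, hD⟩ := hclose
  have hD0 : 0 ≤ D := le_trans dist_nonneg (hD 0 le_rfl)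
  obtain ⟨σα, hσα0, hσα⟩ := mono_control hα
  obtain ⟨σβ, hσβ0, hσβ⟩ := mono_control hβ
  have hb : BornologousOn c01 (concatMap α β) := by
    refine ⟨fun s => σα (3 * s) + σα (3 * s) + σβ (3 * s) + σβ (4 * s) + D, ?_⟩
    intro v hv v' hv'
    dsimp only
    set s := dist v v' with hsdef
    have hs0 : 0 ≤ s := dist_nonneg
    have n1 : 0 ≤ σα (3 * s) := hσα0 _ (by linarith)
    have n2 : 0 ≤ σβ (3 * s) := hσβ0 _ (by linarith)
    have n3 : 0 ≤ σβ (4 * s) := hσβ0 _ (by linarith)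
    have ht0 : 0 ≤ v 1 := hv.1
    have htx : v 1 ≤ v 0 := hv.2
    have ht0' : 0 ≤ v' 1 := hv'.1
    have htx' : v' 1 ≤ v' 0 := hv'.2
    obtain ⟨hxl, hxr⟩ := abs_le.mp (e2_coord0_le v v')
    obtain ⟨htl, htr⟩ := abs_le.mp (e2_coord1_le v v')
    by_cases h1 : v 1 ≤ v 0 / 2 <;> by_cases h2 : v' 1 ≤ v' 0 / 2
    · have key : dist (α !₂[v 0, 2 * v 1]) (α !₂[v' 0, 2 * v' 1]) ≤ σα (3 * s) := by
        refine hσα _ (mem_c01 (by linarith) (by linarith)) _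
          (mem_c01 (by linarith) (by linarith)) _ ?_
        refine e2_dist_le _ _ (by linarith) ?_
        simp only [Matrix.cons_val_zero, Matrix.cons_val_one, Matrix.head_cons, PiLp.toLp_apply]
        nlinarith [hxl, hxr, htl, htr, hs0]
      simp only [concatMap, if_pos h1, if_pos h2]
      linarith
    · have key := cross_bound α β σα σβ D hσα hσβ hD v v' hv hv' h1 h2
      rw [← hsdef] at key
      simp only [concatMap, if_pos h1, if_neg h2]
      linarith
    · have key := cross_bound α β σα σβ D hσα hσβ hD v' v hv' hv h2 h1
      rw [dist_comm v' v, ← hsdef] at key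
      simp only [concatMap, if_neg h1, if_pos h2]
      rw [dist_comm]
      linarith
    · push_neg at h1 h2
      have key : dist (β !₂[v 0, 2 * v 1 - v 0]) (β !₂[v' 0, 2 * v' 1 - v' 0]) ≤ σβ (4 * s) := by
        refine hσβ _ (mem_c01 (by linarith) (by linarith)) _
          (mem_c01 (by linarith) (by linarith)) _ ?_
        refine e2_dist_le _ _ (by linarith) ?_
        simp only [Matrix.cons_val_zero, Matrix.cons_val_one, Matrix.head_cons, PiLp.toLp_apply]
        nlinarith [hxl, hxr, htl, htr, hs0]
      simp only [concatMap]
      rw [if_neg (by push_neg; exact h1), if_neg (by push_neg; exact h2)]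
      linarith
  refine ⟨hb, fun hαc hβc => ⟨hb, ?_⟩⟩
  intro B hB
  obtain ⟨M₁, hM₁⟩ := (hαc.2 B hB).subset_closedBall 0
  obtain ⟨M₂, hM₂⟩ := (hβc.2 B hB).subset_closedBall 0
  set K := max M₁ (max M₂ 0) with hK
  have hK0 : 0 ≤ K := le_trans (le_max_right _ _) (le_max_right _ _)
  have hKM₁ : M₁ ≤ K := le_max_left _ _
  have hKM₂ : M₂ ≤ K := le_trans (le_max_left _ _) (le_max_right _ _)
  refine (Metric.isBounded_closedBall (x := (0 : EuclideanSpace ℝ (Fin 2))) (r := 2 * K)).subset ?_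
  rintro v ⟨hv, hvB⟩
  have ht0 : 0 ≤ v 1 := hv.1
  have htx : v 1 ≤ v 0 := hv.2
  simp only [Set.mem_preimage, concatMap] at hvB
  rw [Metric.mem_closedBall, dist_comm]
  have hzero : ∀ i : Fin 2, (0 : EuclideanSpace ℝ (Fin 2)) i = 0 := fun i => rfl
  by_cases h1 : v 1 ≤ v 0 / 2
  · rw [if_pos h1] at hvB
    set w : EuclideanSpace ℝ (Fin 2) := !₂[v 0, 2 * v 1] with hw
    have hmem : w ∈ Metric.closedBall 0 M₁ :=
      hM₁ ⟨mem_c01 (by linarith) (by linarith), hvB⟩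
    rw [Metric.mem_closedBall] at hmem
    have hM₁0 : 0 ≤ M₁ := le_trans dist_nonneg hmem
    have hsq : (v 0) ^ 2 + (2 * v 1) ^ 2 ≤ M₁ ^ 2 := by
      have h2 : dist w 0 ^ 2 ≤ M₁ ^ 2 := pow_le_pow_left₀ dist_nonneg hmem 2
      rw [e2_dist_sq] at h2
      simp only [hw, Matrix.cons_val_zero, Matrix.cons_val_one, Matrix.head_cons, PiLp.toLp_apply, hzero] at h2
      nlinarith [h2]
    refine e2_dist_le _ _ (by linarith) ?_
    simp only [hzero]
    nlinarith [hsq, hKM₁, hK0, hM₁0, sq_nonneg (v 1)]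
  · rw [if_neg h1] at hvB
    push_neg at h1
    set w : EuclideanSpace ℝ (Fin 2) := !₂[v 0, 2 * v 1 - v 0] with hw
    have hmem : w ∈ Metric.closedBall 0 M₂ :=
      hM₂ ⟨mem_c01 (by linarith) (by linarith), hvB⟩
    rw [Metric.mem_closedBall] at hmem
    have hM₂0 : 0 ≤ M₂ := le_trans dist_nonneg hmem
    have hsq : (v 0) ^ 2 + (2 * v 1 - v 0) ^ 2 ≤ M₂ ^ 2 := by
      have h2 : dist w 0 ^ 2 ≤ M₂ ^ 2 := pow_le_pow_left₀ dist_nonneg hmem 2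
      rw [e2_dist_sq] at h2
      simp only [hw, Matrix.cons_val_zero, Matrix.cons_val_one, Matrix.head_cons, PiLp.toLp_apply, hzero] at h2
      nlinarith [h2]
    refine e2_dist_le _ _ (by linarith) ?_
    simp only [hzero]
    nlinarith [hsq, hKM₂, hK0, hM₂0, sq_nonneg (3 * v 0 - 4 * v 1), sq_nonneg (v 1)]


end
end

section
/- Let G act uniformly coarsely discontinuously by isometries on a metric space X with quotient map q : X → X/G, let b : [0,∞) → X/G be a coarse map with control function ρ, and let b', b'' : [0,∞) → X be two lifts of b (i.e., q∘b' = q∘b'' = b) that are bornologous with control function ρ. Then there exists g ∈ G and an unbounded-complement-avoiding agreement: b''(t) = g·b'(t) for all t outside a bounded set. In particular, every lift of b is equivalent (agreeing outside a bounded set) to g∘b' for a unique g ∈ G. -/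
open Metric Bornology Set

/-- The quotient distance on the orbit space `X/G`, expressed on representatives:
`d([x],[y]) = inf { d(x, y') : y' ∈ [y] }`. -/
noncomputable def orbitDist (G : Type*) {X : Type*} [Group G] [MulAction G X]
    [PseudoMetricSpace X] (x y : X) : ℝ :=
  sInf (Set.range fun g : G => dist x (g • y))

/-- A group action is uniformly coarsely discontinuous if for every `R > 0` there is a
bounded set `K ⊆ X` such that every point outside `⋃_{g} g(K)` is moved more than `R`
by every nontrivial group element. -/
def UnifCoarselyDiscontinuous (G : Type*) (X : Type*) [Group G] [MulAction G X]
    [PseudoMetricSpace X] : Prop :=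
  ∀ R : ℝ, 0 < R → ∃ K : Set X, Bornology.IsBounded K ∧
    ∀ x : X, x ∉ (⋃ g : G, (fun y : X => g • y) '' K) → ∀ g : G, g ≠ 1 → R < dist x (g • x)

/-- Let `G` act uniformly coarsely discontinuously by isometries on
`X`, let `b : [0,∞) → X/G` be a coarse map with control function `ρ`, and let
`b', b'' : [0,∞) → X` be two lifts of `b`, bornologous with control function `ρ`.
Then there is a unique `g ∈ G` such that `b''(t) = g·b'(t)` for all `t` outside a
bounded set; i.e. every lift of `b` is equivalent to `g∘b'` for a unique `g ∈ G`. -/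
theorem lift_equivalent_to_translate {G X : Type*} [Group G] [MulAction G X]
    [MetricSpace X] (hiso : ∀ g : G, Isometry fun x : X => g • x)
    (hdisc : UnifCoarselyDiscontinuous G X)
    (ρ : ℝ → ℝ) (b' b'' : ℝ → X)
    (hb' : ∀ s t : ℝ, 0 ≤ s → 0 ≤ t → dist (b' s) (b' t) ≤ ρ |s - t|)
    (hb'' : ∀ s t : ℝ, 0 ≤ s → 0 ≤ t → dist (b'' s) (b'' t) ≤ ρ |s - t|)
    (hlift : ∀ t : ℝ, 0 ≤ t → ∃ g : G, b'' t = g • b' t)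
    (hproper : ∀ S : Set X, (∃ D : ℝ, ∀ x ∈ S, ∀ y ∈ S, orbitDist G x y ≤ D) →
      Bornology.IsBounded {t : ℝ | 0 ≤ t ∧ ∃ g : G, g • b' t ∈ S}) :
    ∃! g : G, Bornology.IsBounded {t : ℝ | 0 ≤ t ∧ b'' t ≠ g • b' t} := by
  classical
  set gf : ℝ → G := fun t => if h : 0 ≤ t then (hlift t h).choose else 1 with hgf
  have hgfe : ∀ t : ℝ, 0 ≤ t → b'' t = gf t • b' t := by
    intro t ht
    simp only [hgf, dif_pos ht]
    exact (hlift t ht).choose_spec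
  have horb : ∀ x y : X, orbitDist G x y ≤ dist x y := by
    intro x y
    have h1 : dist x ((1:G) • y) = dist x y := by rw [one_smul]
    refine csInf_le ⟨0, ?_⟩ ⟨1, h1⟩
    rintro r ⟨g, rfl⟩; exact dist_nonneg
  -- core lemma: far out, any group element moving b' t by at most 2 max (ρ u) 0 is trivial
  have core : ∀ u : ℝ, 0 < u → ∃ M : ℝ, 0 ≤ M ∧ ∀ (t : ℝ) (k : G),
      M < t → dist (b' t) (k • b' t) ≤ 2 * max (ρ u) 0 → k = 1 := by
    intro u hu
    have hRpos : (0:ℝ) < 2 * max (ρ u) 0 + 1 := by positivity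
    obtain ⟨K, hKb, hK⟩ := hdisc (2 * max (ρ u) 0 + 1) hRpos
    obtain ⟨C, hC⟩ := Metric.isBounded_iff.mp hKb
    have hT := hproper K ⟨C, fun x hx y hy => (horb x y).trans (hC hx hy)⟩
    obtain ⟨r, hr⟩ := hT.subset_closedBall 0
    refine ⟨max r 0, le_max_right _ _, ?_⟩
    intro t k hMt hdk
    by_contra hk
    have ht0 : (0:ℝ) ≤ t := le_of_lt (lt_of_le_of_lt (le_max_right r 0) hMt)
    have hb't : b' t ∉ ⋃ g : G, (fun y : X => g • y) '' K := by
      intro hmem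
      simp only [Set.mem_iUnion, Set.mem_image] at hmem
      obtain ⟨g, y, hyK, hgy⟩ := hmem
      have hTmem : t ∈ {t : ℝ | 0 ≤ t ∧ ∃ g : G, g • b' t ∈ K} := by
        refine ⟨ht0, g⁻¹, ?_⟩
        rw [← hgy, ← mul_smul, inv_mul_cancel, one_smul]
        exact hyK
      have h2 := hr hTmem
      rw [Metric.mem_closedBall, Real.dist_eq, sub_zero] at h2
      have h3 : t ≤ |t| := le_abs_self t
      have h4 : r ≤ max r 0 := le_max_left r 0
      linarith
    have := hK (b' t) hb't k hk
    linarith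
  -- step lemma: gf constant along steps of size exactly u, far out
  have hstep : ∀ u : ℝ, 0 < u → ∃ M : ℝ, 0 ≤ M ∧ ∀ s t : ℝ, 0 ≤ s → M < t →
      (t = s + u ∨ s = t + u) → gf s = gf t := by
    intro u hu
    obtain ⟨M, hM0, hM⟩ := core u hu
    refine ⟨M, hM0, ?_⟩
    intro s t hs hMt hst
    have ht : (0:ℝ) ≤ t := le_trans hM0 hMt.le
    have habs : |t - s| = u := by
      rcases hst with h | h
      · rw [h]; simp [abs_of_pos hu]
      · rw [h, show t - (t + u) = -u by ring, abs_neg, abs_of_pos hu]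
    have habs' : |s - t| = u := by rw [abs_sub_comm]; exact habs
    have hd1 : dist (b' t) (((gf t)⁻¹ * gf s) • b' s) = dist (gf t • b' t) (gf s • b' s) := by
      rw [← (hiso (gf t)).dist_eq (b' t) (((gf t)⁻¹ * gf s) • b' s)]
      simp only [← mul_smul, ← mul_assoc, mul_inv_cancel, one_mul]
    have hd2 : dist (((gf t)⁻¹ * gf s) • b' s) (((gf t)⁻¹ * gf s) • b' t) = dist (b' s) (b' t) :=
      (hiso ((gf t)⁻¹ * gf s)).dist_eq (b' s) (b' t)
    have h1 : dist (gf t • b' t) (gf s • b' s) ≤ ρ u := by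
      rw [← hgfe t ht, ← hgfe s hs]
      have := hb'' t s ht hs
      rwa [habs] at this
    have h2 : dist (b' s) (b' t) ≤ ρ u := by
      have := hb' s t hs ht
      rwa [habs'] at this
    have hdist : dist (b' t) (((gf t)⁻¹ * gf s) • b' t) ≤ 2 * max (ρ u) 0 := by
      calc dist (b' t) (((gf t)⁻¹ * gf s) • b' t)
          ≤ dist (b' t) (((gf t)⁻¹ * gf s) • b' s)
            + dist (((gf t)⁻¹ * gf s) • b' s) (((gf t)⁻¹ * gf s) • b' t) := dist_triangle _ _ _
        _ ≤ ρ u + ρ u := by rw [hd1, hd2]; exact add_le_add h1 h2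
        _ ≤ 2 * max (ρ u) 0 := by
            have := le_max_left (ρ u) 0; linarith
    have := hM t ((gf t)⁻¹ * gf s) hMt hdist
    exact (inv_mul_eq_one.mp this).symm
  obtain ⟨M₁, hM₁0, hstep1⟩ := hstep 1 one_pos
  have hchain : ∀ n : ℕ, ∀ t : ℝ, M₁ < t → gf (t + n) = gf t := by
    intro n
    induction n with
    | zero => intro t _; simp
    | succ n ih =>
      intro t hMt
      have hsn : gf (t + n) = gf (t + (n + 1 : ℕ)) := by
        apply hstep1 (t + n) (t + (n + 1 : ℕ))
        · have : (0:ℝ) ≤ n := Nat.cast_nonneg n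
          linarith [lt_of_le_of_lt hM₁0 hMt]
        · have : (0:ℝ) ≤ (n + 1 : ℕ) := Nat.cast_nonneg _
          linarith
        · left; push_cast; ring
      rw [← hsn, ih t hMt]
  set t₀ : ℝ := M₁ + 1 with ht₀def
  have hglobal : ∀ t : ℝ, t₀ ≤ t → gf t = gf t₀ := by
    intro t ht
    rcases eq_or_lt_of_le ht with heq | hlt
    · rw [← heq]
    · set c : ℝ := t - t₀ with hc
      have hc0 : 0 < c := by simp only [hc]; linarith
      set n : ℕ := ⌈c⌉₊ - 1 with hn
      have hceil1 : 1 ≤ ⌈c⌉₊ := Nat.ceil_pos.mpr hc0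
      have hn1 : (n : ℝ) + 1 = (⌈c⌉₊ : ℝ) := by
        rw [hn]; push_cast [Nat.cast_sub hceil1]; ring
      set u : ℝ := c - n with hu
      have hu_pos : 0 < u := by
        have h1 : (⌈c⌉₊ : ℝ) < c + 1 := Nat.ceil_lt_add_one hc0.le
        simp only [hu]; linarith
      have hu_le : u ≤ 1 := by
        have h1 : c ≤ (⌈c⌉₊ : ℝ) := Nat.le_ceil c
        simp only [hu]; linarith
      have hteq : (t₀ + u) + (n:ℝ) = t := by simp only [hu, hc]; ring
      have e1 : gf t = gf (t₀ + u) := by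
        rw [← hteq]; exact hchain n (t₀ + u) (by simp only [ht₀def]; linarith)
      obtain ⟨Mu, hMu0, hstepu⟩ := hstep u hu_pos
      set m : ℕ := ⌈Mu⌉₊ with hm
      have hmge : Mu ≤ (m:ℝ) := Nat.le_ceil Mu
      have ht₀1 : (1:ℝ) ≤ t₀ := by simp only [ht₀def]; linarith
      have e2 : gf (t₀ + u + m) = gf (t₀ + u) :=
        hchain m (t₀ + u) (by simp only [ht₀def]; linarith)
      have e3 : gf (t₀ + m) = gf (t₀ + u + m) := by
        apply hstepu (t₀ + m) (t₀ + u + m)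
        · have : (0:ℝ) ≤ m := Nat.cast_nonneg m
          linarith
        · linarith
        · left; ring
      have e4 : gf (t₀ + m) = gf t₀ := hchain m t₀ (by simp only [ht₀def]; linarith)
      rw [e1, ← e2, ← e3, e4]
  have hBdd : Bornology.IsBounded {t : ℝ | 0 ≤ t ∧ b'' t ≠ gf t₀ • b' t} := by
    apply (isBounded_Icc 0 t₀).subset
    rintro t ⟨ht0, hne⟩
    rw [Set.mem_Icc]
    refine ⟨ht0, ?_⟩
    by_contra h
    push_neg at h
    exact hne (by rw [hgfe t ht0, hglobal t h.le])
  obtain ⟨Mc, hMc0, hMc⟩ := core 1 one_pos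
  refine ⟨gf t₀, hBdd, ?_⟩
  intro g' hg'
  obtain ⟨r1, hr1⟩ := hg'.subset_closedBall 0
  obtain ⟨r2, hr2⟩ := hBdd.subset_closedBall 0
  set T : ℝ := max (max r1 r2) Mc + 1 with hT
  have hTMc : Mc < T := by
    have := le_max_right (max r1 r2) Mc; simp only [hT]; linarith
  have hT0 : (0:ℝ) ≤ T := le_trans hMc0 hTMc.le
  have hTr1 : r1 < T := by
    have h1 := le_max_left r1 r2
    have h2 := le_max_left (max r1 r2) Mc
    simp only [hT]; linarith
  have hTr2 : r2 < T := by
    have h1 := le_max_right r1 r2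
    have h2 := le_max_left (max r1 r2) Mc
    simp only [hT]; linarith
  have h1 : b'' T = g' • b' T := by
    by_contra h
    have hmem : T ∈ {t : ℝ | 0 ≤ t ∧ b'' t ≠ g' • b' t} := ⟨hT0, h⟩
    have h2 := hr1 hmem
    rw [Metric.mem_closedBall, Real.dist_eq, sub_zero] at h2
    have := le_abs_self T
    linarith
  have h2 : b'' T = gf t₀ • b' T := by
    by_contra h
    have hmem : T ∈ {t : ℝ | 0 ≤ t ∧ b'' t ≠ gf t₀ • b' t} := ⟨hT0, h⟩
    have h3 := hr2 hmem
    rw [Metric.mem_closedBall, Real.dist_eq, sub_zero] at h3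
    have := le_abs_self T
    linarith
  have hd : dist (b' T) ((g'⁻¹ * gf t₀) • b' T) ≤ 2 * max (ρ 1) 0 := by
    have heq : dist (b' T) ((g'⁻¹ * gf t₀) • b' T) = dist (g' • b' T) (gf t₀ • b' T) := by
      rw [← (hiso g').dist_eq (b' T) ((g'⁻¹ * gf t₀) • b' T)]
      simp only [← mul_smul, ← mul_assoc, mul_inv_cancel, one_mul]
    rw [heq, ← h1, ← h2, dist_self]
    positivity
  have := hMc T (g'⁻¹ * gf t₀) hTMc hd
  exact (inv_mul_eq_one.mp this)
end
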